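/- The DEA-R function and the DEA-OPTD function agree: for all a, b with b ≠ 0 and all c, if deaOpt a b c = some (x, y) then dea a b c = some y, and deaOpt a b c = none iff dea a b c = none. -/

import Mathlib

def dea (a b : ℕ) (c : ℤ) : Option ℤ :=
  if h : b = 0 then none
  else if (b : ℤ) ∣ (c - a) then some ((c - (a : ℤ)) / b)
  else Option.map (fun y => (c - y * a) / b) (dea b (a % b) c)
termination_by b
decreasing_by exact Nat.mod_lt a (Nat.pos_of_ne_zero h)


def deaOpt (a b : ℕ) (c : ℤ) : Option (ℤ × ℤ) :=
  if h : b = 0 then none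
  else if (b : ℤ) ∣ (c - a) then some (1, (c - (a : ℤ)) / b)
  else Option.map (fun p => (p.2, p.1 - p.2 * ((a : ℤ) / b))) (deaOpt b (a % b) c)
termination_by b
decreasing_by exact Nat.mod_lt a (Nat.pos_of_ne_zero h)

lemma dea_aux : ∀ b a : ℕ, ∀ c : ℤ,
    (∀ x y : ℤ, deaOpt a b c = some (x, y) → x * a + y * b = c ∧ dea a b c = some y) ∧
    (deaOpt a b c = none ↔ dea a b c = none) := by
  intro b
  induction b using Nat.strong_induction_on with
  | _ b ih =>
    intro a c
    by_cases hb : b = 0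
    · subst hb; rw [dea, deaOpt]; simp
    · by_cases hd : (b : ℤ) ∣ (c - a)
      · rw [dea, deaOpt]
        simp only [hb, dif_neg, not_false_iff, if_pos hd]
        refine ⟨?_, by simp⟩
        intro x y hxy
        simp only [Option.some.injEq, Prod.mk.injEq] at hxy
        obtain ⟨hx, hy⟩ := hxy
        subst hx hy
        refine ⟨?_, rfl⟩
        rw [Int.ediv_mul_cancel hd]; ring
      · have hlt : a % b < b := Nat.mod_lt a (Nat.pos_of_ne_zero hb)
        obtain ⟨ihsome, ihnone⟩ := ih (a % b) hlt b c
        rw [dea, deaOpt]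
        simp only [hb, dif_neg, not_false_iff, if_neg hd]
        rcases h : deaOpt b (a % b) c with _ | ⟨x', y'⟩
        · have h2 : dea b (a % b) c = none := ihnone.mp h
          simp [h2]
        · obtain ⟨hinv, hdea⟩ := ihsome x' y' h
          have hr : ((a % b : ℕ) : ℤ) = (a : ℤ) % b := by push_cast; ring
          rw [hr] at hinv
          have hb' : (b : ℤ) ≠ 0 := by exact_mod_cast hb
          have key : c - y' * a = (x' - y' * ((a : ℤ) / b)) * b := by
            have he := Int.mul_ediv_add_emod (a : ℤ) (b : ℤ)
            linear_combination y' * he - hinv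
          simp only [hdea, Option.map_some, Option.some.injEq, Prod.mk.injEq,
            reduceCtorEq, Option.map_eq_none_iff]
          constructor
          · rintro x y ⟨hx, hy⟩
            subst hx hy
            refine ⟨by linear_combination -key, ?_⟩
            rw [key, Int.mul_ediv_cancel _ hb']
          · trivial

theorem stmt_8 (a b : ℕ) (c : ℤ) (hb : b ≠ 0) :
    (∀ x y : ℤ, deaOpt a b c = some (x, y) → dea a b c = some y) ∧
    (deaOpt a b c = none ↔ dea a b c = none) := by
  obtain ⟨h1, h2⟩ := dea_aux b a c
  exact ⟨fun x y h => (h1 x y h).2, h2⟩
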